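/- arXiv:2409.17041 — 5 statements merged into one kernel-verified Lean document; each statement's English description precedes it below -/
import Mathlib

section
/- Let λ > 0, d > 0, φ₁ < φ₂ be real numbers, and let −π/2 ≤ θ₁ < θ₂ ≤ π/2. Then | (1 / ((φ₂ − φ₁)(sin θ₂ − sin θ₁))) · ∫_{φ₁}^{φ₂} ∫_{θ₁}^{θ₂} exp( i (2π/λ) d sin θ ) cos θ dθ dφ | = | sinc( (2d/λ) · cos((θ₂ + θ₁)/2) · sin((θ₂ − θ₁)/2) ) |. -/
open Real Complex intervalIntegral

/-- The normalized sinc function: `sinc x = sin (π x) / (π x)` for `x ≠ 0` and `sinc 0 = 1`. -/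
noncomputable def nsinc (x : ℝ) : ℝ :=
  if x = 0 then 1 else Real.sin (Real.pi * x) / (Real.pi * x)

lemma abs_exp_I_sub (x y : ℝ) :
    ‖(Complex.exp (Complex.I * x) - Complex.exp (Complex.I * y))‖
      = 2 * |Real.sin ((x - y) / 2)| := by
  have h : ∀ t : ℝ, Complex.exp (Complex.I * t)
      = (Real.cos t : ℂ) + (Real.sin t : ℂ) * Complex.I := by
    intro t
    rw [mul_comm, Complex.exp_mul_I]
    simp
  rw [h, h]
  have hdiff : ((Real.cos x : ℂ) + (Real.sin x : ℂ) * Complex.I)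
      - ((Real.cos y : ℂ) + (Real.sin y : ℂ) * Complex.I)
      = ((Real.cos x - Real.cos y : ℝ) : ℂ) + ((Real.sin x - Real.sin y : ℝ) : ℂ) * Complex.I := by
    push_cast; ring
  rw [hdiff, Complex.norm_add_mul_I]
  have hcos : Real.cos (x - y) = 1 - 2 * Real.sin ((x - y) / 2) ^ 2 := by
    have h1 := Real.sin_sq_add_cos_sq ((x - y) / 2)
    have h2 := Real.cos_two_mul ((x - y) / 2)
    have h3 : (2:ℝ) * ((x - y) / 2) = x - y := by ring
    rw [h3] at h2; nlinarith
  have hsq : (Real.cos x - Real.cos y) ^ 2 + (Real.sin x - Real.sin y) ^ 2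
      = (2 * |Real.sin ((x - y) / 2)|) ^ 2 := by
    have h1 := Real.sin_sq_add_cos_sq x
    have h2 := Real.sin_sq_add_cos_sq y
    have h3 := Real.cos_sub x y
    have h4 : |Real.sin ((x - y) / 2)| ^ 2 = Real.sin ((x - y) / 2) ^ 2 := sq_abs _
    nlinarith
  rw [hsq, Real.sqrt_sq (by positivity)]

/-- Proposition 2: the magnitude of the normalized spatial correlation under isotropic
scattering over azimuth `[φ₁, φ₂]` and elevation `[θ₁, θ₂]` equals the sinc law. -/
theorem spatial_correlation_sinc_law
    (lam d φ₁ φ₂ θ₁ θ₂ : ℝ) (hlam : 0 < lam) (hd : 0 < d) (hφ : φ₁ < φ₂)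
    (hθ₁ : -(Real.pi / 2) ≤ θ₁) (hθ : θ₁ < θ₂) (hθ₂ : θ₂ ≤ Real.pi / 2) :
    ‖((1 / (((φ₂ - φ₁) * (Real.sin θ₂ - Real.sin θ₁) : ℝ) : ℂ)) *
        ∫ φ in φ₁..φ₂, ∫ θ in θ₁..θ₂,
          Complex.exp (Complex.I * ((2 * Real.pi / lam) * d * Real.sin θ : ℝ)) *
            ((Real.cos θ : ℝ) : ℂ))‖
      = |nsinc ((2 * d / lam) * Real.cos ((θ₂ + θ₁) / 2) * Real.sin ((θ₂ - θ₁) / 2))| := by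
  have hpi := Real.pi_pos
  set a : ℝ := 2 * Real.pi / lam * d with ha_def
  have ha : 0 < a := by positivity
  have hsin : Real.sin θ₁ < Real.sin θ₂ :=
    Real.strictMonoOn_sin ⟨hθ₁, le_trans hθ.le hθ₂⟩ ⟨le_trans hθ₁ hθ.le, hθ₂⟩ hθ
  set Δ : ℝ := Real.sin θ₂ - Real.sin θ₁ with hΔ_def
  have hΔ : 0 < Δ := sub_pos.2 hsin
  set c : ℂ := Complex.I * (a : ℂ) with hc_def
  have hc : c ≠ 0 := by
    simp [hc_def, Complex.I_ne_zero, Complex.ofReal_ne_zero, ha.ne']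
  -- inner integral
  have hinner : (∫ θ in θ₁..θ₂,
        Complex.exp (Complex.I * ((2 * Real.pi / lam) * d * Real.sin θ : ℝ)) *
          ((Real.cos θ : ℝ) : ℂ))
      = (Complex.exp (c * (Real.sin θ₂ : ℂ)) - Complex.exp (c * (Real.sin θ₁ : ℂ))) / c := by
    have hderiv : ∀ t ∈ Set.uIcc θ₁ θ₂,
        HasDerivAt (fun θ : ℝ => Complex.exp (c * (Real.sin θ : ℂ)) / c)
          (Complex.exp (Complex.I * ((2 * Real.pi / lam) * d * Real.sin t : ℝ)) *
            ((Real.cos t : ℝ) : ℂ)) t := by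
      intro t _
      have h1 : HasDerivAt (fun θ : ℝ => ((Real.sin θ : ℝ) : ℂ)) ((Real.cos t : ℝ) : ℂ) t :=
        (Real.hasDerivAt_sin t).ofReal_comp
      have h2 : HasDerivAt (fun θ : ℝ => c * ((Real.sin θ : ℝ) : ℂ)) (c * (Real.cos t : ℂ)) t :=
        h1.const_mul c
      have h3 := (h2.cexp).div_const c
      refine h3.congr_deriv ?_
      have : Complex.I * (((2 * Real.pi / lam) * d * Real.sin t : ℝ) : ℂ)
          = c * ((Real.sin t : ℝ) : ℂ) := by
        rw [hc_def]; push_cast [ha_def]; ring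
      rw [this]
      field_simp
    have hcont : IntervalIntegrable (fun θ : ℝ =>
        Complex.exp (Complex.I * ((2 * Real.pi / lam) * d * Real.sin θ : ℝ)) *
          ((Real.cos θ : ℝ) : ℂ)) MeasureTheory.volume θ₁ θ₂ := by
      apply Continuous.intervalIntegrable
      fun_prop
    rw [intervalIntegral.integral_eq_sub_of_hasDerivAt hderiv hcont]
    ring
  rw [← ha_def] at hinner
  simp only [hinner]
  rw [intervalIntegral.integral_const]
  -- now compute the absolute value
  have habs : ‖(Complex.exp (c * (Real.sin θ₂ : ℂ)) - Complex.exp (c * (Real.sin θ₁ : ℂ)))‖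
      = 2 * |Real.sin (a * Δ / 2)| := by
    have e₂ : c * (Real.sin θ₂ : ℂ) = Complex.I * ((a * Real.sin θ₂ : ℝ) : ℂ) := by
      rw [hc_def]; push_cast; ring
    have e₁ : c * (Real.sin θ₁ : ℂ) = Complex.I * ((a * Real.sin θ₁ : ℝ) : ℂ) := by
      rw [hc_def]; push_cast; ring
    rw [e₂, e₁, abs_exp_I_sub]
    congr 2
    rw [hΔ_def]; ring
  have habs_c : ‖c‖ = a := by
    simp [hc_def, Complex.norm_real, abs_of_pos ha]
  rw [Complex.real_smul]
  rw [norm_mul, norm_mul, norm_div, norm_div, habs, habs_c, norm_one,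
    Complex.norm_real, Real.norm_eq_abs, Complex.norm_real, Real.norm_eq_abs]
  set x : ℝ := 2 * d / lam * Real.cos ((θ₂ + θ₁) / 2) * Real.sin ((θ₂ - θ₁) / 2) with hx_def
  have hπx : Real.pi * x = a * Δ / 2 := by
    rw [hx_def, hΔ_def, Real.sin_sub_sin, ha_def]; field_simp
  have hπxpos : 0 < Real.pi * x := by rw [hπx]; positivity
  have hxne : x ≠ 0 := by
    intro h0; rw [h0, mul_zero] at hπxpos; exact lt_irrefl _ hπxpos
  rw [nsinc, if_neg hxne, abs_div, abs_of_pos hπxpos, hπx]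
  rw [abs_of_pos (mul_pos (sub_pos.2 hφ) hΔ), abs_of_pos (sub_pos.2 hφ)]
  have hΔne : Δ ≠ 0 := hΔ.ne'
  have hane : a ≠ 0 := ha.ne'
  have hφne : φ₂ - φ₁ ≠ 0 := (sub_pos.2 hφ).ne'
  field_simp
end

section
/- Let λ > 0, d > 0, φ₁ < φ₂ be real numbers, let −π/2 ≤ θ₁ < θ₂ ≤ π/2, set b = 2πd/λ, s₁ = sin θ₁, and s₂ = sin θ₂. Then (1 / ((φ₂ − φ₁)(s₂ − s₁))) · ∫_{φ₁}^{φ₂} ∫_{θ₁}^{θ₂} exp( i b sin θ ) cos θ dθ dφ = exp( i b (s₁ + s₂)/2 ) · sin( b (s₂ − s₁)/2 ) / ( b (s₂ − s₁)/2 ). -/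
open Real Complex intervalIntegral

/-- Exact complex-valued form of the normalized spatial correlation in the proof of
Proposition 2: with `b = 2πd/λ`, `s₁ = sin θ₁`, `s₂ = sin θ₂`, the normalized correlation
integral equals the phase factor `e^{i b (s₁+s₂)/2}` times `sin(b(s₂−s₁)/2)/(b(s₂−s₁)/2)`. -/
theorem spatial_correlation_exact_form
    (lam d φ₁ φ₂ θ₁ θ₂ : ℝ) (hlam : 0 < lam) (hd : 0 < d) (hφ : φ₁ < φ₂)
    (hθ₁ : -(Real.pi / 2) ≤ θ₁) (hθ : θ₁ < θ₂) (hθ₂ : θ₂ ≤ Real.pi / 2)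
    (b s₁ s₂ : ℝ) (hb : b = 2 * Real.pi * d / lam)
    (hs₁ : s₁ = Real.sin θ₁) (hs₂ : s₂ = Real.sin θ₂) :
    (1 / (((φ₂ - φ₁) * (s₂ - s₁) : ℝ) : ℂ)) *
        ∫ φ in φ₁..φ₂, ∫ θ in θ₁..θ₂,
          Complex.exp (Complex.I * (b * Real.sin θ : ℝ)) * ((Real.cos θ : ℝ) : ℂ)
      = Complex.exp (Complex.I * (b * (s₁ + s₂) / 2 : ℝ)) *
          ((Real.sin (b * (s₂ - s₁) / 2) / (b * (s₂ - s₁) / 2) : ℝ) : ℂ) := by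
  have hb0 : 0 < b := by
    rw [hb]; positivity
  have hs : s₁ < s₂ := by
    rw [hs₁, hs₂]
    exact Real.strictMonoOn_sin ⟨hθ₁, le_trans (le_of_lt hθ) hθ₂⟩
      ⟨le_trans hθ₁ (le_of_lt hθ), hθ₂⟩ hθ
  have hIb : (Complex.I * (b : ℂ)) ≠ 0 := by
    simp [Complex.I_ne_zero, Complex.ofReal_ne_zero, ne_of_gt hb0]
  -- inner integral via substitution u = sin θ
  have hinner : (∫ θ in θ₁..θ₂,
      Complex.exp (Complex.I * (b * Real.sin θ : ℝ)) * ((Real.cos θ : ℝ) : ℂ))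
      = ∫ u in s₁..s₂, Complex.exp (Complex.I * b * u) := by
    rw [hs₁, hs₂]
    have := intervalIntegral.integral_comp_smul_deriv
      (a := θ₁) (b := θ₂) (f := Real.sin) (f' := Real.cos)
      (g := fun u : ℝ => Complex.exp (Complex.I * b * u))
      (fun x _ => Real.hasDerivAt_sin x)
      (Real.continuous_cos.continuousOn)
      (by continuity)
    rw [← this]
    apply intervalIntegral.integral_congr
    intro x _
    simp [Complex.real_smul]
    push_cast
    ring_nf
  -- evaluate ∫ exp(I b u)
  have hexp : (∫ u in s₁..s₂, Complex.exp (Complex.I * b * u))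
      = (Complex.exp (Complex.I * b * s₂) - Complex.exp (Complex.I * b * s₁)) /
        (Complex.I * b) := by
    exact integral_exp_mul_complex hIb
  rw [hinner, hexp, intervalIntegral.integral_const]
  have hβ : (b * (s₂ - s₁) / 2 : ℝ) ≠ 0 := by
    have : s₂ - s₁ > 0 := by linarith
    positivity
  have hφ0 : (φ₂ - φ₁ : ℝ) ≠ 0 := by linarith
  have hss : (s₂ - s₁ : ℝ) ≠ 0 := by linarith
  -- key identity: exp(i b s₂) - exp(i b s₁) = exp(i b (s₁+s₂)/2) * (2 i sin(b(s₂-s₁)/2))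
  have key : Complex.exp (Complex.I * b * s₂) - Complex.exp (Complex.I * b * s₁)
      = Complex.exp (Complex.I * (b * (s₁ + s₂) / 2 : ℝ)) *
        (2 * Complex.I * ((Real.sin (b * (s₂ - s₁) / 2) : ℝ) : ℂ)) := by
    have h2 : Complex.I * b * s₂ = Complex.I * (b * (s₁ + s₂) / 2 : ℝ)
        + ((b * (s₂ - s₁) / 2 : ℝ) : ℂ) * Complex.I := by push_cast; ring
    have h1 : Complex.I * b * s₁ = Complex.I * (b * (s₁ + s₂) / 2 : ℝ)
        + (-((b * (s₂ - s₁) / 2 : ℝ) : ℂ)) * Complex.I := by push_cast; ring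
    rw [h2, h1, Complex.exp_add, Complex.exp_add, Complex.exp_mul_I, Complex.exp_mul_I]
    rw [Complex.cos_neg, Complex.sin_neg]
    rw [← Complex.ofReal_sin]
    ring
  rw [key]
  -- now pure algebra
  have hcancel : Complex.exp (Complex.I * (b * (s₁ + s₂) / 2 : ℝ)) *
        (2 * Complex.I * ((Real.sin (b * (s₂ - s₁) / 2) : ℝ) : ℂ)) / (Complex.I * b)
      = Complex.exp (Complex.I * (b * (s₁ + s₂) / 2 : ℝ)) *
        (2 * ((Real.sin (b * (s₂ - s₁) / 2) : ℝ) : ℂ)) / (b : ℂ) := by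
    have h : Complex.exp (Complex.I * (b * (s₁ + s₂) / 2 : ℝ)) *
        (2 * Complex.I * ((Real.sin (b * (s₂ - s₁) / 2) : ℝ) : ℂ))
        = Complex.I * (Complex.exp (Complex.I * (b * (s₁ + s₂) / 2 : ℝ)) *
          (2 * ((Real.sin (b * (s₂ - s₁) / 2) : ℝ) : ℂ))) := by ring
    rw [h, mul_div_mul_left _ _ Complex.I_ne_zero]
  rw [hcancel, Complex.real_smul]
  have h1 : ((φ₂ - φ₁ : ℝ) : ℂ) ≠ 0 := Complex.ofReal_ne_zero.mpr hφ0
  have h2 : ((s₂ - s₁ : ℝ) : ℂ) ≠ 0 := Complex.ofReal_ne_zero.mpr hss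
  have h3 : ((b : ℝ) : ℂ) ≠ 0 := Complex.ofReal_ne_zero.mpr (ne_of_gt hb0)
  have h1' : ((φ₂ : ℂ) - φ₁) ≠ 0 := by
    rw [← Complex.ofReal_sub]; exact h1
  have h2' : ((s₂ : ℂ) - s₁) ≠ 0 := by
    rw [← Complex.ofReal_sub]; exact h2
  push_cast
  field_simp
end

section
/- Let λ > 0, d > 0, φ₁ < φ₂ be real numbers, and let 0 < θ_c ≤ π. With θ₁ = −π/2 and θ₂ = −π/2 + θ_c, | (1 / ((φ₂ − φ₁)(sin θ₂ − sin θ₁))) · ∫_{φ₁}^{φ₂} ∫_{θ₁}^{θ₂} exp( i (2π/λ) d sin θ ) cos θ dθ dφ | = | sinc( (2d/λ) · sin²(θ_c/2) ) |. -/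
open Real Complex intervalIntegral

lemma abs_exp_I_sub_exp_I (α β : ℝ) :
    ‖Complex.exp (Complex.I * α) - Complex.exp (Complex.I * β)‖
      = 2 * |Real.sin ((α - β) / 2)| := by
  have e : Complex.exp (Complex.I * α) - Complex.exp (Complex.I * β)
      = Complex.exp ((((α + β) / 2 : ℝ) : ℂ) * Complex.I) *
          (2 * Complex.sin (((α - β) / 2 : ℝ)) * Complex.I) := by
    have h1 : Complex.I * (α : ℂ)
        = (((α + β) / 2 : ℝ) : ℂ) * Complex.I + (((α - β) / 2 : ℝ) : ℂ) * Complex.I := by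
      push_cast; ring
    have h2 : Complex.I * (β : ℂ)
        = (((α + β) / 2 : ℝ) : ℂ) * Complex.I + (-((α - β) / 2 : ℝ) : ℂ) * Complex.I := by
      push_cast; ring
    rw [h1, h2, Complex.exp_add, Complex.exp_add, ← mul_sub]
    push_cast
    simp only [Complex.exp_mul_I, Complex.sin_neg, Complex.cos_neg]
    ring
  rw [e, norm_mul, Complex.norm_exp_ofReal_mul_I, one_mul, norm_mul, norm_mul,
    Complex.norm_I, mul_one, ← Complex.ofReal_sin, Complex.norm_real, Real.norm_eq_abs]
  norm_num

/-- Corollary 1, first case (antenna separation aligned with the surface direction):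
with `θ₁ = −π/2` and `θ₂ = −π/2 + θ_c`, the normalized spatial correlation magnitude is
`|sinc((2d/λ) sin²(θ_c/2))|`. -/
theorem spatial_correlation_aligned_case
    (lam d φ₁ φ₂ θc : ℝ) (hlam : 0 < lam) (hd : 0 < d) (hφ : φ₁ < φ₂)
    (hθc : 0 < θc) (hθc' : θc ≤ Real.pi)
    (θ₁ θ₂ : ℝ) (hθ₁ : θ₁ = -(Real.pi / 2)) (hθ₂ : θ₂ = -(Real.pi / 2) + θc) :
    ‖(1 / (((φ₂ - φ₁) * (Real.sin θ₂ - Real.sin θ₁) : ℝ) : ℂ)) *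
        ∫ φ in φ₁..φ₂, ∫ θ in θ₁..θ₂,
          Complex.exp (Complex.I * ((2 * Real.pi / lam) * d * Real.sin θ : ℝ)) *
            ((Real.cos θ : ℝ) : ℂ)‖
      = |nsinc ((2 * d / lam) * Real.sin (θc / 2) ^ 2)| := by
  have hπ := Real.pi_pos
  set a : ℝ := 2 * Real.pi / lam * d with ha
  have hapos : 0 < a := by positivity
  -- antiderivative
  have key : ∀ θ : ℝ,
      HasDerivAt (fun θ : ℝ => Complex.exp (Complex.I * ((a * Real.sin θ : ℝ) : ℂ)) / (Complex.I * a))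
        (Complex.exp (Complex.I * ((a * Real.sin θ : ℝ) : ℂ)) * ((Real.cos θ : ℝ) : ℂ)) θ := by
    intro θ
    have h1 : HasDerivAt (fun θ : ℝ => a * Real.sin θ) (a * Real.cos θ) θ :=
      (Real.hasDerivAt_sin θ).const_mul a
    have h2 : HasDerivAt (fun θ : ℝ => ((a * Real.sin θ : ℝ) : ℂ)) ((a * Real.cos θ : ℝ) : ℂ) θ :=
      h1.ofReal_comp
    have h5 := (((h2.const_mul Complex.I).cexp).div_const (Complex.I * a))
    refine h5.congr_deriv ?_
    have hIa : (Complex.I * (a : ℂ)) ≠ 0 :=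
      mul_ne_zero Complex.I_ne_zero (by exact_mod_cast hapos.ne')
    rw [div_eq_iff hIa]
    push_cast
    ring
  have hcont : Continuous fun θ : ℝ =>
      Complex.exp (Complex.I * ((a * Real.sin θ : ℝ) : ℂ)) * ((Real.cos θ : ℝ) : ℂ) := by
    fun_prop
  have inner : (∫ θ in θ₁..θ₂,
        Complex.exp (Complex.I * ((a * Real.sin θ : ℝ) : ℂ)) * ((Real.cos θ : ℝ) : ℂ))
      = (Complex.exp (Complex.I * ((a * Real.sin θ₂ : ℝ) : ℂ))
          - Complex.exp (Complex.I * ((a * Real.sin θ₁ : ℝ) : ℂ))) / (Complex.I * a) := by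
    rw [intervalIntegral.integral_eq_sub_of_hasDerivAt (fun θ _ => key θ)
      (hcont.intervalIntegrable θ₁ θ₂)]
    rw [div_sub_div_same]
  -- rewrite the integrand of the double integral
  have hrw : (∫ φ in φ₁..φ₂, ∫ θ in θ₁..θ₂,
        Complex.exp (Complex.I * ((2 * Real.pi / lam) * d * Real.sin θ : ℝ)) *
          ((Real.cos θ : ℝ) : ℂ))
      = (φ₂ - φ₁) • ((Complex.exp (Complex.I * ((a * Real.sin θ₂ : ℝ) : ℂ))
          - Complex.exp (Complex.I * ((a * Real.sin θ₁ : ℝ) : ℂ))) / (Complex.I * a)) := by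
    have : ∀ θ : ℝ, (2 * Real.pi / lam) * d * Real.sin θ = a * Real.sin θ := by
      intro θ; rw [ha]
    simp_rw [this, inner, intervalIntegral.integral_const]
  rw [hrw]
  -- trigonometric values
  have hsin1 : Real.sin θ₁ = -1 := by rw [hθ₁]; simp
  have hsin2 : Real.sin θ₂ = -Real.cos θc := by
    rw [hθ₂, show -(Real.pi / 2) + θc = θc - Real.pi / 2 by ring, Real.sin_sub]
    simp
  have hhalf : 1 - Real.cos θc = 2 * Real.sin (θc / 2) ^ 2 := by
    have h1 := Real.cos_two_mul (θc / 2)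
    have h2 := Real.sin_sq_add_cos_sq (θc / 2)
    have h3 : Real.cos (2 * (θc / 2)) = Real.cos θc := by congr 1; ring
    nlinarith
  set x : ℝ := (2 * d / lam) * Real.sin (θc / 2) ^ 2 with hx
  have hsinhalf : 0 < Real.sin (θc / 2) :=
    Real.sin_pos_of_pos_of_lt_pi (by linarith) (by linarith)
  have hxpos : 0 < x := by positivity
  set S : ℝ := Real.sin θ₂ - Real.sin θ₁ with hS
  have hSval : S = 2 * Real.sin (θc / 2) ^ 2 := by
    rw [hS, hsin1, hsin2]; linarith
  have hSpos : 0 < S := by rw [hSval]; positivity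
  have haS : a * S = 2 * (Real.pi * x) := by
    rw [hSval, ha, hx]; field_simp
  -- compute the absolute value
  rw [Complex.real_smul, norm_mul, norm_mul, norm_div, norm_div, norm_mul, norm_one,
    Complex.norm_real, Real.norm_eq_abs, Complex.norm_real, Real.norm_eq_abs, Complex.norm_I, one_mul, Complex.norm_real, Real.norm_eq_abs,
    abs_exp_I_sub_exp_I]
  have harg : (a * Real.sin θ₂ - a * Real.sin θ₁) / 2 = Real.pi * x := by
    have : a * Real.sin θ₂ - a * Real.sin θ₁ = a * S := by rw [hS]; ring
    rw [this, haS]; ring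
  rw [harg]
  have h1 : |(φ₂ - φ₁) * S| = (φ₂ - φ₁) * S :=
    abs_of_pos (mul_pos (by linarith) hSpos)
  have h2 : |φ₂ - φ₁| = φ₂ - φ₁ := abs_of_pos (by linarith)
  have h3 : |a| = a := abs_of_pos hapos
  rw [h1, h2, h3]
  have hns : nsinc x = Real.sin (Real.pi * x) / (Real.pi * x) := by
    rw [nsinc, if_neg hxpos.ne']
  rw [hns, abs_div]
  have h4 : |Real.pi * x| = Real.pi * x := abs_of_pos (by positivity)
  rw [h4]
  have hne : φ₂ - φ₁ ≠ 0 := by linarith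
  clear_value a x S
  field_simp
  linear_combination (-|Real.sin (Real.pi * x)|) * haS
end

section
/- Let λ > 0, d > 0, φ₁ < φ₂ be real numbers, and let 0 < θ_c ≤ π. With θ₁ = −θ_c/2 and θ₂ = θ_c/2, | (1 / ((φ₂ − φ₁)(sin θ₂ − sin θ₁))) · ∫_{φ₁}^{φ₂} ∫_{θ₁}^{θ₂} exp( i (2π/λ) d sin θ ) cos θ dθ dφ | = | sinc( (2d/λ) · sin(θ_c/2) ) |. -/
open Real Complex intervalIntegral

/-- Corollary 1, second case (antenna separation perpendicular to the surface direction):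
with `θ₁ = −θ_c/2` and `θ₂ = θ_c/2`, the normalized spatial correlation magnitude is
`|sinc((2d/λ) sin(θ_c/2))|`. -/
theorem spatial_correlation_perpendicular_case
    (lam d φ₁ φ₂ θc : ℝ) (hlam : 0 < lam) (hd : 0 < d) (hφ : φ₁ < φ₂)
    (hθc : 0 < θc) (hθc' : θc ≤ Real.pi)
    (θ₁ θ₂ : ℝ) (hθ₁ : θ₁ = -(θc / 2)) (hθ₂ : θ₂ = θc / 2) :
    ‖(1 / (((φ₂ - φ₁) * (Real.sin θ₂ - Real.sin θ₁) : ℝ) : ℂ)) *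
        ∫ φ in φ₁..φ₂, ∫ θ in θ₁..θ₂,
          Complex.exp (Complex.I * ((2 * Real.pi / lam) * d * Real.sin θ : ℝ)) *
            ((Real.cos θ : ℝ) : ℂ)‖
      = |nsinc ((2 * d / lam) * Real.sin (θc / 2))| := by
  have hpi := Real.pi_pos
  set a : ℝ := 2 * Real.pi / lam * d with ha
  have ha0 : 0 < a := by positivity
  set s : ℝ := Real.sin (θc / 2) with hs
  have hs0 : 0 < s := Real.sin_pos_of_pos_of_lt_pi (by linarith) (by linarith)
  have haC : ((a : ℂ)) ≠ 0 := by exact_mod_cast ha0.ne'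
  have hIa : (Complex.I * (a : ℂ)) ≠ 0 := mul_ne_zero Complex.I_ne_zero haC
  -- derivative of the antiderivative
  have hder : ∀ t : ℝ, HasDerivAt
      (fun t : ℝ => Complex.exp (Complex.I * ((a * Real.sin t : ℝ) : ℂ)) / (Complex.I * (a : ℂ)))
      (Complex.exp (Complex.I * ((a * Real.sin t : ℝ) : ℂ)) * ((Real.cos t : ℝ) : ℂ)) t := by
    intro t
    have h1 : HasDerivAt (fun t : ℝ => ((Real.sin t : ℝ) : ℂ)) ((Real.cos t : ℝ) : ℂ) t :=
      (Real.hasDerivAt_sin t).ofReal_comp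
    have h2 : HasDerivAt (fun t : ℝ => Complex.I * ((a * Real.sin t : ℝ) : ℂ))
        (Complex.I * (a : ℂ) * ((Real.cos t : ℝ) : ℂ)) t := by
      have := h1.const_mul (Complex.I * (a : ℂ))
      simpa [Complex.ofReal_mul, mul_comm, mul_left_comm, mul_assoc] using this
    have h4 := h2.cexp.div_const (Complex.I * (a : ℂ))
    rw [mul_div_assoc, mul_div_cancel_left₀ _ hIa] at h4
    exact h4
  have hcont : Continuous (fun t : ℝ =>
      Complex.exp (Complex.I * ((a * Real.sin t : ℝ) : ℂ)) * ((Real.cos t : ℝ) : ℂ)) := by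
    fun_prop
  have hsin1 : Real.sin θ₂ = s := by rw [hθ₂]
  have hsin2 : Real.sin θ₁ = -s := by rw [hθ₁, Real.sin_neg]
  have hinner : (∫ θ in θ₁..θ₂,
        Complex.exp (Complex.I * ((2 * Real.pi / lam) * d * Real.sin θ : ℝ)) *
          ((Real.cos θ : ℝ) : ℂ))
      = ((2 * Real.sin (a * s) : ℝ) : ℂ) / (a : ℂ) := by
    have heq : (∫ θ in θ₁..θ₂,
        Complex.exp (Complex.I * ((2 * Real.pi / lam) * d * Real.sin θ : ℝ)) *
          ((Real.cos θ : ℝ) : ℂ))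
        = ∫ θ in θ₁..θ₂,
        Complex.exp (Complex.I * ((a * Real.sin θ : ℝ) : ℂ)) * ((Real.cos θ : ℝ) : ℂ) := by
      simp [ha]
    rw [heq, intervalIntegral.integral_eq_sub_of_hasDerivAt (fun t _ => hder t)
      (hcont.intervalIntegrable _ _)]
    rw [hsin1, hsin2]
    have e1 : Complex.I * ((a * s : ℝ) : ℂ) = ((a * s : ℝ) : ℂ) * Complex.I := mul_comm _ _
    have e2 : Complex.I * ((a * -s : ℝ) : ℂ) = ((-(a * s) : ℝ) : ℂ) * Complex.I := by
      push_cast; ring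
    rw [e1, e2, Complex.exp_mul_I, Complex.exp_mul_I]
    rw [Complex.ofReal_neg, Complex.cos_neg, Complex.sin_neg]
    rw [div_sub_div_same]
    rw [div_eq_div_iff hIa haC]
    push_cast
    ring
  rw [← ha] at hinner
  simp only [hinner, intervalIntegral.integral_const, hsin1, hsin2]
  have hφ0 : φ₂ - φ₁ ≠ 0 := sub_ne_zero.mpr hφ.ne'
  have hval : (1 / (((φ₂ - φ₁) * (s - -s) : ℝ) : ℂ)) *
      ((φ₂ - φ₁) • (((2 * Real.sin (a * s) : ℝ) : ℂ) / (a : ℂ)))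
      = ((Real.sin (a * s) / (a * s) : ℝ) : ℂ) := by
    rw [real_smul]
    obtain ⟨b, hb⟩ : ∃ b, Real.sin (a * s) = b := ⟨_, rfl⟩
    rw [hb]
    push_cast
    have hsC : ((s : ℂ)) ≠ 0 := by exact_mod_cast hs0.ne'
    have hφC : (((φ₂ : ℂ) - φ₁)) ≠ 0 := by
      rw [sub_ne_zero]; exact_mod_cast hφ.ne'
    have hss : ((s : ℂ) - -(s : ℂ)) ≠ 0 := by
      rw [sub_neg_eq_add, ← two_mul]; exact mul_ne_zero two_ne_zero hsC
    rw [div_mul_eq_mul_div, one_mul,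
      div_eq_div_iff (mul_ne_zero hφC hss) (mul_ne_zero haC hsC)]
    field_simp
    ring
  rw [hval, Complex.norm_real, Real.norm_eq_abs]
  have hx0 : (2 * d / lam) * s ≠ 0 := by positivity
  have hxa : Real.pi * ((2 * d / lam) * s) = a * s := by
    rw [ha]; field_simp
  rw [hs] at *
  rw [nsinc, if_neg hx0, hxa]
end

section
/- Let p, q, u be points of Euclidean space ℝ³ with p ≠ q, let o = (p + q)/2 be their midpoint, and suppose the distance δ from u to the closed segment [p, q] is strictly positive. Then | ( ‖u − q‖ − ‖u − p‖ ) − ⟨ q − p , (o − u)/‖o − u‖ ⟩ | ≤ ‖q − p‖² / (2δ), where ⟨·,·⟩ is the Euclidean inner product. -/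
open Metric

set_option maxHeartbeats 1000000 in
/-- Purely real-number core of the estimate. -/
lemma aux_first_order (A B C D S δ : ℝ) (hδ : 0 < δ) (h1 : δ ≤ A) (h2 : δ ≤ B)
    (h3 : δ ≤ C)
    (hA2 : A ^ 2 = D ^ 2 / 4 - S + C ^ 2) (hB2 : B ^ 2 = D ^ 2 / 4 + S + C ^ 2)
    (hS : |S| ≤ D * C) (hAB : |A - B| ≤ D) (hD : D ≤ A + B) (hDpos : 0 < D) :
    |(B - A) - C⁻¹ * S| ≤ D ^ 2 / (2 * δ) := by
  have hA0 : 0 < A := lt_of_lt_of_le hδ h1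
  have hB0 : 0 < B := lt_of_lt_of_le hδ h2
  have hC : 0 < C := lt_of_lt_of_le hδ h3
  have hden : 0 < C * ((A + C) * (B + C)) := by positivity
  have key : ((B - A) * C - S) * ((A + C) * (B + C))
      = S * (C ^ 2 - A * B) + C * (D ^ 2 / 4) * (A - B) := by
    linear_combination (A * C + C ^ 2) * hB2 - (B * C + C ^ 2) * hA2
  have hE : (B - A) - C⁻¹ * S
      = (S * (C ^ 2 - A * B) + C * (D ^ 2 / 4) * (A - B)) / (C * ((A + C) * (B + C))) := by
    have hinvC : C⁻¹ * C = 1 := inv_mul_cancel₀ hC.ne'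
    rw [eq_div_iff (ne_of_gt hden)]
    linear_combination key - (S * ((A + C) * (B + C))) * hinvC
  have hABsq : (A - B) ^ 2 ≤ D ^ 2 := by
    have h := abs_le.mp hAB
    nlinarith [h.1, h.2]
  have hCAB : |C ^ 2 - A * B| ≤ D ^ 2 / 4 := by
    rw [abs_le]
    constructor <;> nlinarith [hABsq]
  have hABd := abs_le.mp hAB
  have hN : |S * (C ^ 2 - A * B) + C * (D ^ 2 / 4) * (A - B)| ≤ C * D ^ 3 / 2 := by
    calc |S * (C ^ 2 - A * B) + C * (D ^ 2 / 4) * (A - B)|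
        ≤ |S * (C ^ 2 - A * B)| + |C * (D ^ 2 / 4) * (A - B)| := abs_add_le _ _
      _ = |S| * |C ^ 2 - A * B| + (C * (D ^ 2 / 4)) * |A - B| := by
          rw [abs_mul, abs_mul, abs_of_nonneg (by positivity : (0:ℝ) ≤ C * (D ^ 2 / 4))]
      _ ≤ (D * C) * (D ^ 2 / 4) + (C * (D ^ 2 / 4)) * D := by
          have t1 : |S| * |C ^ 2 - A * B| ≤ (D * C) * (D ^ 2 / 4) :=
            mul_le_mul hS hCAB (abs_nonneg _) (by positivity)
          have t2 : (C * (D ^ 2 / 4)) * |A - B| ≤ (C * (D ^ 2 / 4)) * D :=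
            mul_le_mul_of_nonneg_left hAB (by positivity)
          linarith
      _ = C * D ^ 3 / 2 := by ring
  rw [hE, abs_div, abs_of_pos hden, div_le_div_iff₀ hden (by positivity)]
  have h2δ : (0:ℝ) ≤ 2 * δ := by positivity
  have s1 := mul_le_mul_of_nonneg_right hN h2δ
  have s2a : D * δ ≤ (A + B) * C := mul_le_mul hD h3 hδ.le (by positivity)
  have s2 : D * δ ≤ (A + C) * (B + C) := by nlinarith [mul_pos hA0 hB0, sq_nonneg C]
  have s3 := mul_le_mul_of_nonneg_left s2 (by positivity : (0:ℝ) ≤ C * D ^ 2)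
  linarith [s1, s3]

/-- First-order geometric expansion (eq. (29) of the paper): the difference of distances
from `u` to `q` and to `p` equals the inner product of `q − p` with the unit vector from `u`
toward the midpoint `o = (p+q)/2`, up to an error bounded by `‖q − p‖² / (2δ)`, where `δ > 0`
is the distance from `u` to the segment `[p, q]`. -/
theorem dist_difference_first_order_expansion
    (p q u : EuclideanSpace ℝ (Fin 3)) (hpq : p ≠ q)
    (o : EuclideanSpace ℝ (Fin 3)) (ho : o = midpoint ℝ p q)
    (δ : ℝ) (hδ : δ = Metric.infDist u (segment ℝ p q)) (hδpos : 0 < δ) :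
    |(‖u - q‖ - ‖u - p‖) - (inner ℝ (q - p) ((‖o - u‖)⁻¹ • (o - u)) : ℝ)|
      ≤ ‖q - p‖ ^ 2 / (2 * δ) := by
  have hδA : δ ≤ ‖u - p‖ := by
    rw [hδ]
    simpa [dist_eq_norm] using Metric.infDist_le_dist_of_mem (left_mem_segment ℝ p q)
  have hδB : δ ≤ ‖u - q‖ := by
    rw [hδ]
    simpa [dist_eq_norm] using Metric.infDist_le_dist_of_mem (right_mem_segment ℝ p q)
  have hδC : δ ≤ ‖o - u‖ := by
    rw [hδ]
    have hmem : o ∈ segment ℝ p q := ho ▸ midpoint_mem_segment p q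
    rw [norm_sub_rev]
    simpa [dist_eq_norm] using Metric.infDist_le_dist_of_mem hmem
  have hup : u - p = (2:ℝ)⁻¹ • (q - p) - (o - u) := by
    rw [ho, midpoint_eq_smul_add, invOf_eq_inv]
    module
  have huq : u - q = (-(2:ℝ)⁻¹) • (q - p) - (o - u) := by
    rw [ho, midpoint_eq_smul_add, invOf_eq_inv]
    module
  have hA2 : ‖u - p‖ ^ 2 = ‖q - p‖ ^ 2 / 4 - inner ℝ (q - p) (o - u) + ‖o - u‖ ^ 2 := by
    rw [hup, @norm_sub_sq_real, norm_smul, real_inner_smul_left]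
    simp [norm_inv]
    ring
  have hB2 : ‖u - q‖ ^ 2 = ‖q - p‖ ^ 2 / 4 + inner ℝ (q - p) (o - u) + ‖o - u‖ ^ 2 := by
    rw [huq, @norm_sub_sq_real, norm_smul, real_inner_smul_left]
    simp [norm_inv]
    ring
  have hS : |(inner ℝ (q - p) (o - u) : ℝ)| ≤ ‖q - p‖ * ‖o - u‖ := abs_real_inner_le_norm _ _
  have hsub : (u - p) - (u - q) = q - p := by module
  have hAB : |‖u - p‖ - ‖u - q‖| ≤ ‖q - p‖ := by
    simpa [hsub] using abs_norm_sub_norm_le (u - p) (u - q)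
  have hD : ‖q - p‖ ≤ ‖u - p‖ + ‖u - q‖ := by
    calc ‖q - p‖ = ‖(u - p) - (u - q)‖ := by rw [hsub]
      _ ≤ ‖u - p‖ + ‖u - q‖ := norm_sub_le _ _
  have hDpos : 0 < ‖q - p‖ := by
    simpa [sub_ne_zero] using (norm_pos_iff.mpr (sub_ne_zero.mpr hpq.symm))
  have hinner : (inner ℝ (q - p) ((‖o - u‖)⁻¹ • (o - u)) : ℝ)
      = (‖o - u‖)⁻¹ * inner ℝ (q - p) (o - u) := real_inner_smul_right _ _ _
  rw [hinner]
  exact aux_first_order (‖u - p‖) (‖u - q‖) (‖o - u‖) (‖q - p‖)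
    (inner ℝ (q - p) (o - u)) δ hδpos hδA hδB hδC hA2 hB2 hS hAB hD hDpos
end
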